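/- If bₙ → ∞ with bₙ ≤ √((2 − ε) log n) for some ε ∈ (0,1), and |P(Tₙ ≥ x) − Φ(−x)| ≤ C/n uniformly in x for some constant C, then P(Tₙ ≥ bₙ)/Φ(−bₙ) → 1 as n → ∞. -/

import Mathlib

open MeasureTheory Filter

noncomputable def stdGaussPdf (x : ℝ) : ℝ :=
  (Real.sqrt (2 * Real.pi))⁻¹ * Real.exp (-x ^ 2 / 2)

noncomputable def stdGaussCdf (x : ℝ) : ℝ := ∫ t in Set.Iic x, stdGaussPdf t

lemma pdf_pos (x : ℝ) : 0 < stdGaussPdf x := by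
  unfold stdGaussPdf
  positivity

lemma pdf_integrable : Integrable stdGaussPdf := by
  have h : Integrable (fun x : ℝ => Real.exp (-(2⁻¹:ℝ) * x ^ 2)) :=
    integrable_exp_neg_mul_sq (by norm_num)
  have h2 := h.const_mul (Real.sqrt (2*Real.pi))⁻¹
  refine h2.congr (Filter.EventuallyEq.of_eq ?_)
  funext x
  unfold stdGaussPdf
  ring_nf

lemma cdf_ge (b : ℝ) (hb : 0 ≤ b) : stdGaussPdf (b+1) ≤ stdGaussCdf (-b) := by
  have h1 : ∫ _ in Set.Icc (-b-1) (-b), stdGaussPdf (b+1)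
      ≤ ∫ t in Set.Icc (-b-1) (-b), stdGaussPdf t := by
    apply setIntegral_mono_on
    · exact integrableOn_const measure_Icc_lt_top.ne
    · exact pdf_integrable.integrableOn
    · exact measurableSet_Icc
    · intro t ht
      unfold stdGaussPdf
      apply mul_le_mul_of_nonneg_left _ (by positivity)
      apply Real.exp_le_exp.2
      have h1 := ht.1
      have h2 := ht.2
      nlinarith
  have h2 : ∫ t in Set.Icc (-b-1) (-b), stdGaussPdf t ≤ stdGaussCdf (-b) := by
    apply setIntegral_mono_set pdf_integrable.integrableOn
    · exact Filter.Eventually.of_forall fun t => (pdf_pos t).le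
    · exact Filter.Eventually.of_forall fun t ht => ht.2
  have h3 : ∫ _ in Set.Icc (-b-1) (-b), stdGaussPdf (b+1) = stdGaussPdf (b+1) := by
    rw [setIntegral_const, Real.volume_real_Icc]
    norm_num
  linarith

lemma sqrt_tendsto_atTop : Filter.Tendsto Real.sqrt atTop atTop := by
  apply tendsto_atTop_atTop.2
  intro c
  refine ⟨(max c 0)^2, fun L hL => ?_⟩
  calc c ≤ max c 0 := le_max_left _ _
    _ = Real.sqrt ((max c 0)^2) := (Real.sqrt_sq (le_max_right _ _)).symm
    _ ≤ Real.sqrt L := Real.sqrt_le_sqrt hL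

lemma F_tendsto (ε : ℝ) (hε1 : 0 < ε) :
    Tendsto (fun L : ℝ => -(ε/2)*L + Real.sqrt (2-ε) * Real.sqrt L + 1/2) atTop atBot := by
  have hmul : Tendsto (fun L : ℝ => ε/2 * Real.sqrt L) atTop atTop :=
    sqrt_tendsto_atTop.const_mul_atTop (by positivity)
  have hinner : Tendsto (fun L : ℝ => Real.sqrt (2-ε) - ε/2 * Real.sqrt L) atTop atBot := by
    simpa [sub_eq_add_neg] using tendsto_atBot_add_const_left atTop (Real.sqrt (2-ε))
      (tendsto_neg_atTop_atBot.comp hmul)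
  have hG : Tendsto (fun L : ℝ => Real.sqrt L * (Real.sqrt (2-ε) - ε/2 * Real.sqrt L))
      atTop atBot := sqrt_tendsto_atTop.atTop_mul_atBot₀ hinner
  have hG2 := tendsto_atBot_add_const_right atTop (1/2 : ℝ) hG
  refine hG2.congr' ?_
  filter_upwards [eventually_ge_atTop (0:ℝ)] with L hL
  have : Real.sqrt L * Real.sqrt L = L := Real.mul_self_sqrt hL
  ring_nf
  nlinarith [this]

/-- If `bₙ → ∞` with `bₙ ≤ √((2 − ε) log n)` for some `ε ∈ (0,1)`, and
`|P(Tₙ ≥ x) − Φ(−x)| ≤ C/n` uniformly in `x`, then `P(Tₙ ≥ bₙ)/Φ(−bₙ) → 1`. -/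
theorem stmt12 {Ω : Type*} [MeasurableSpace Ω] (P : Measure Ω) [IsProbabilityMeasure P]
    (T : ℕ → Ω → ℝ) (b : ℕ → ℝ) (ε : ℝ) (hε : ε ∈ Set.Ioo (0 : ℝ) 1)
    (hb : Filter.Tendsto b Filter.atTop Filter.atTop)
    (hble : ∀ n : ℕ, b n ≤ Real.sqrt ((2 - ε) * Real.log n))
    (C : ℝ)
    (hunif : ∀ (n : ℕ) (x : ℝ),
      |(P {ω | x ≤ T n ω}).toReal - stdGaussCdf (-x)| ≤ C / n) :
    Filter.Tendsto
      (fun n => (P {ω | b n ≤ T n ω}).toReal / stdGaussCdf (-(b n)))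
      Filter.atTop (nhds 1) := by
  obtain ⟨hε1, hε2⟩ := hε
  have hC : 0 ≤ C := le_trans (abs_nonneg _) (by simpa using hunif 1 0)
  set g : ℕ → ℝ := fun n =>
    C * Real.sqrt (2*Real.pi) * Real.exp ((b n + 1)^2/2 - Real.log n) with hg
  -- the exponent tends to -∞
  have he : Tendsto (fun n : ℕ => (b n + 1)^2/2 - Real.log n) atTop atBot := by
    have hF : Tendsto (fun n : ℕ =>
        -(ε/2)*Real.log n + Real.sqrt (2-ε) * Real.sqrt (Real.log n) + 1/2) atTop atBot :=
      (F_tendsto ε hε1).comp (Real.tendsto_log_atTop.comp tendsto_natCast_atTop_atTop)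
    apply tendsto_atBot_mono' _ _ hF
    filter_upwards [hb.eventually_ge_atTop 0, eventually_ge_atTop 1] with n hbn hn1
    have hL : 0 ≤ Real.log n := Real.log_nonneg (by exact_mod_cast hn1)
    have h1 : b n + 1 ≤ Real.sqrt ((2-ε)*Real.log n) + 1 := by linarith [hble n]
    have h2 : (b n + 1)^2 ≤ (Real.sqrt ((2-ε)*Real.log n)+1)^2 :=
      pow_le_pow_left₀ (by linarith) h1 2
    have hsq : Real.sqrt ((2-ε)*Real.log n)^2 = (2-ε)*Real.log n :=
      Real.sq_sqrt (mul_nonneg (by linarith) hL)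
    have hs : Real.sqrt ((2-ε)*Real.log n)
        = Real.sqrt (2-ε) * Real.sqrt (Real.log n) := Real.sqrt_mul (by linarith) _
    rw [← hs]
    nlinarith [h2, hsq]
  have hg0 : Tendsto g atTop (nhds 0) := by
    have hexp : Tendsto (fun n : ℕ => Real.exp ((b n + 1)^2/2 - Real.log n)) atTop (nhds 0) :=
      Real.tendsto_exp_atBot.comp he
    have h := hexp.const_mul (C * Real.sqrt (2*Real.pi))
    rw [mul_zero] at h
    exact h
  have hbound : ∀ᶠ n in atTop,
      ‖(P {ω | b n ≤ T n ω}).toReal / stdGaussCdf (-(b n)) - 1‖ ≤ g n := by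
    filter_upwards [hb.eventually_ge_atTop 0, eventually_ge_atTop 1] with n hbn hn1
    set p := (P {ω | b n ≤ T n ω}).toReal with hp
    set q := stdGaussCdf (-(b n)) with hq
    have hq_lb : stdGaussPdf (b n + 1) ≤ q := cdf_ge (b n) hbn
    have hqpos : 0 < q := lt_of_lt_of_le (pdf_pos _) hq_lb
    have hn0 : (0:ℝ) < n := by exact_mod_cast hn1
    rw [Real.norm_eq_abs, div_sub_one hqpos.ne', abs_div, abs_of_pos hqpos]
    calc |p - q| / q ≤ (C/n) / q := by
          gcongr
          exact hunif n (b n)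
      _ ≤ (C/n) / stdGaussPdf (b n + 1) := by
          gcongr
          exact pdf_pos _
      _ = g n := by
          unfold stdGaussPdf
          simp only [hg]
          rw [Real.exp_sub, Real.exp_log hn0, neg_div, Real.exp_neg]
          have h2π : (0:ℝ) < Real.sqrt (2*Real.pi) :=
            Real.sqrt_pos.2 (by positivity)
          have hex : (0:ℝ) < Real.exp ((b n + 1)^2/2) := Real.exp_pos _
          field_simp
  have hsqz : Tendsto (fun n => (P {ω | b n ≤ T n ω}).toReal / stdGaussCdf (-(b n)) - 1)
      atTop (nhds 0) := squeeze_zero_norm' hbound hg0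
  have := hsqz.add_const 1
  simpa using this
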